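/- Let e₁*, e₂*, e₃* be real numbers with 1 ≥ |e₁*| ≥ |e₂*| ≥ |e₃*|, let A, B ∈ SO(3), and let R = B·diag(e₁*,e₂*,e₃*)·A. Then: (a) for every O_A, O_B ∈ SO(3), writing R' = O_B·R·O_A and letting S' be the upper-left 2×2 submatrix of R', for every d₁, d₂ ∈ ℝ and U', V' ∈ SO(2) with S' = V'·diag(d₁,d₂)·U', one has 1 − h₂((1+d₁)/2) − h₂((1+d₂)/2) + h₂((1+√(R'₁₁² + R'₂₁²))/2) − h₂((1+R'₁₁)/2) ≤ 1 − h₂((1+|e₁*|)/2) − h₂((1+|e₂*|)/2); and (b) there exist O_A, O_B ∈ SO(3), d₁, d₂ ∈ ℝ and U', V' ∈ SO(2) as above for which equality holds. -/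
import Mathlib

/-- Binary entropy function (base-2 logarithm), with the convention `0 * log 0 = 0`. -/
noncomputable def h2 (p : ℝ) : ℝ := -(p * Real.logb 2 p) - (1 - p) * Real.logb 2 (1 - p)

/-- `M` is a real 3×3 special orthogonal matrix. -/
def SO3 (M : Matrix (Fin 3) (Fin 3) ℝ) : Prop := M.transpose * M = 1 ∧ M.det = 1

/-- `M` is a real 2×2 special orthogonal matrix. -/
def SO2 (M : Matrix (Fin 2) (Fin 2) ℝ) : Prop := M.transpose * M = 1 ∧ M.det = 1

/-- Upper-left 2×2 submatrix of a 3×3 real matrix. -/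
def sub2 (M : Matrix (Fin 3) (Fin 3) ℝ) : Matrix (Fin 2) (Fin 2) ℝ :=
  !![M 0 0, M 0 1; M 1 0, M 1 1]

open Matrix

lemma h2_eq' (p : ℝ) : h2 p = Real.binEntropy p / Real.log 2 := by
  rw [h2, Real.binEntropy, Real.log_inv, Real.log_inv, Real.logb, Real.logb]
  ring

lemma h2_symm (p : ℝ) : h2 (1 - p) = h2 p := by
  rw [h2, h2, sub_sub_cancel]; ring

lemma h2_abs (x : ℝ) : h2 ((1 + |x|) / 2) = h2 ((1 + x) / 2) := by
  rcases abs_cases x with ⟨h, _⟩ | ⟨h, _⟩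
  · rw [h]
  · rw [h, show (1 + -x) / 2 = 1 - (1 + x) / 2 by ring, h2_symm]

lemma h2_anti {x y : ℝ} (hx : 0 ≤ x) (hxy : x ≤ y) (hy : y ≤ 1) :
    h2 ((1 + y) / 2) ≤ h2 ((1 + x) / 2) := by
  rw [h2_eq', h2_eq']
  have hlog : 0 < Real.log 2 := Real.log_pos one_lt_two
  have : Real.binEntropy ((1 + y) / 2) ≤ Real.binEntropy ((1 + x) / 2) :=
    Real.binEntropy_strictAntiOn.antitoneOn
      (Set.mem_Icc.mpr ⟨by linarith, by linarith⟩)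
      (Set.mem_Icc.mpr ⟨by linarith, by linarith⟩) (by linarith)
  exact div_le_div_of_nonneg_right this hlog.le

lemma ortho_dot {n : ℕ} {M : Matrix (Fin n) (Fin n) ℝ} (h : Mᵀ * M = 1) (x : Fin n → ℝ) :
    M.mulVec x ⬝ᵥ M.mulVec x = x ⬝ᵥ x := by
  rw [Matrix.dotProduct_mulVec, ← Matrix.mulVec_transpose, Matrix.mulVec_mulVec, h,
    Matrix.one_mulVec]

lemma key_bound (e1 e2 e3 : ℝ) (h32 : |e3| ≤ |e2|) (h21 : |e2| ≤ |e1|)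
    (Q P M : Matrix (Fin 3) (Fin 3) ℝ) (hQ : Qᵀ * Q = 1) (hP : Pᵀ * P = 1)
    (hM : M = Q * Matrix.diagonal ![e1, e2, e3] * P) (x : Fin 3 → ℝ) :
    (M *ᵥ x) 0 ^ 2 + (M *ᵥ x) 1 ^ 2 ≤ e1 ^ 2 * (x ⬝ᵥ x) ∧
    ((P *ᵥ x) 0 = 0 → (M *ᵥ x) 0 ^ 2 + (M *ᵥ x) 1 ^ 2 ≤ e2 ^ 2 * (x ⬝ᵥ x)) := by
  have hMx : M *ᵥ x = Q *ᵥ ((Matrix.diagonal ![e1, e2, e3]) *ᵥ (P *ᵥ x)) := by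
    rw [hM, Matrix.mulVec_mulVec, Matrix.mulVec_mulVec, Matrix.mul_assoc]
  have h1 : (M *ᵥ x) ⬝ᵥ (M *ᵥ x) =
      ((Matrix.diagonal ![e1, e2, e3]) *ᵥ (P *ᵥ x)) ⬝ᵥ
        ((Matrix.diagonal ![e1, e2, e3]) *ᵥ (P *ᵥ x)) := by
    rw [hMx]; exact ortho_dot hQ _
  have h2' : (P *ᵥ x) ⬝ᵥ (P *ᵥ x) = x ⬝ᵥ x := ortho_dot hP x
  have he2 : e2 ^ 2 ≤ e1 ^ 2 := by
    have := pow_le_pow_left₀ (abs_nonneg e2) h21 2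
    simpa [sq_abs] using this
  have he3 : e3 ^ 2 ≤ e2 ^ 2 := by
    have := pow_le_pow_left₀ (abs_nonneg e3) h32 2
    simpa [sq_abs] using this
  have he3' : 0 ≤ e3 ^ 2 := sq_nonneg _
  simp only [dotProduct, Fin.sum_univ_three, Matrix.mulVec_diagonal,
    Matrix.cons_val_zero, Matrix.cons_val_one, Matrix.head_cons,
    Matrix.cons_val_two, Matrix.tail_cons] at h1 h2' ⊢
  constructor
  · nlinarith [sq_nonneg ((M *ᵥ x) 2), sq_nonneg ((P *ᵥ x) 0), sq_nonneg ((P *ᵥ x) 1),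
      sq_nonneg ((P *ᵥ x) 2), h2']
  · intro h0
    rw [h0] at h1
    nlinarith [sq_nonneg ((M *ᵥ x) 2), sq_nonneg ((P *ᵥ x) 1), sq_nonneg ((P *ᵥ x) 2), h2']

lemma mulVec3_zero (M : Matrix (Fin 3) (Fin 3) ℝ) (a b : ℝ) (i : Fin 3) :
    (M *ᵥ ![a, b, 0]) i = M i 0 * a + M i 1 * b := by
  simp [Matrix.mulVec, dotProduct, Fin.sum_univ_three]

lemma dot3_zero (a b c d : ℝ) : ![a, b, (0:ℝ)] ⬝ᵥ ![c, d, 0] = a * c + b * d := by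
  simp [dotProduct, Fin.sum_univ_three]

lemma vdU (V U : Matrix (Fin 2) (Fin 2) ℝ) (d1 d2 : ℝ) (i j : Fin 2) :
    (V * Matrix.diagonal ![d1, d2] * U) i j =
      V i 0 * d1 * U 0 j + V i 1 * d2 * U 1 j := by
  simp [Matrix.mul_apply, Fin.sum_univ_two, Matrix.diagonal_apply]

/-- scalar min-singular-value argument -/
lemma minmax (d1 d2 e2 : ℝ) (v00 v01 v10 v11 a0 b0 : ℝ)
    (c00 : v00 * v00 + v10 * v10 = 1) (c01 : v00 * v01 + v10 * v11 = 0)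
    (c11 : v01 * v01 + v11 * v11 = 1)
    (H : ∀ α β : ℝ, α * a0 + β * b0 = 0 →
      (α * (d1 * v00) + β * (d2 * v01)) ^ 2 + (α * (d1 * v10) + β * (d2 * v11)) ^ 2
        ≤ e2 ^ 2 * (α ^ 2 + β ^ 2)) :
    d1 ^ 2 ≤ e2 ^ 2 ∨ d2 ^ 2 ≤ e2 ^ 2 := by
  by_cases ha : a0 = 0
  · left
    have h := H 1 0 (by rw [ha]; ring)
    nlinarith [h, c00]
  · have h := H (-b0) a0 (by ring)
    have E : (-b0 * (d1 * v00) + a0 * (d2 * v01)) ^ 2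
        + (-b0 * (d1 * v10) + a0 * (d2 * v11)) ^ 2
        = b0 ^ 2 * d1 ^ 2 + a0 ^ 2 * d2 ^ 2 := by
      linear_combination (b0 ^ 2 * d1 ^ 2) * c00 + (a0 ^ 2 * d2 ^ 2) * c11
        + (-2 * a0 * b0 * d1 * d2) * c01
    rw [E] at h
    by_cases hd : d1 ^ 2 ≤ e2 ^ 2
    · exact Or.inl hd
    · right
      push_neg at hd
      have ha2 : 0 < a0 ^ 2 := by positivity
      nlinarith [sq_nonneg b0]

lemma sq_bound_helper (d v0 v1 E : ℝ) (hc : v0 * v0 + v1 * v1 = 1)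
    (hB : (d * v0) ^ 2 + (d * v1) ^ 2 ≤ E * 1) : d ^ 2 ≤ E := by nlinarith [hc, hB]

set_option maxHeartbeats 1000000 in
theorem stmt13 (e1 e2 e3 : ℝ) (h32 : |e3| ≤ |e2|) (h21 : |e2| ≤ |e1|) (h11 : |e1| ≤ 1)
    (A B : Matrix (Fin 3) (Fin 3) ℝ) (hA : SO3 A) (hB : SO3 B)
    (R : Matrix (Fin 3) (Fin 3) ℝ)
    (hR : R = B * Matrix.diagonal ![e1, e2, e3] * A) :
    (∀ OA OB, SO3 OA → SO3 OB →
      ∀ (d1 d2 : ℝ) (U' V' : Matrix (Fin 2) (Fin 2) ℝ), SO2 U' → SO2 V' →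
        sub2 (OB * R * OA) = V' * Matrix.diagonal ![d1, d2] * U' →
        1 - h2 ((1 + d1) / 2) - h2 ((1 + d2) / 2)
            + h2 ((1 + Real.sqrt (((OB * R * OA) 0 0) ^ 2 + ((OB * R * OA) 1 0) ^ 2)) / 2)
            - h2 ((1 + (OB * R * OA) 0 0) / 2)
          ≤ 1 - h2 ((1 + |e1|) / 2) - h2 ((1 + |e2|) / 2)) ∧
    (∃ OA OB, SO3 OA ∧ SO3 OB ∧
      ∃ (d1 d2 : ℝ) (U' V' : Matrix (Fin 2) (Fin 2) ℝ), SO2 U' ∧ SO2 V' ∧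
        sub2 (OB * R * OA) = V' * Matrix.diagonal ![d1, d2] * U' ∧
        1 - h2 ((1 + d1) / 2) - h2 ((1 + d2) / 2)
            + h2 ((1 + Real.sqrt (((OB * R * OA) 0 0) ^ 2 + ((OB * R * OA) 1 0) ^ 2)) / 2)
            - h2 ((1 + (OB * R * OA) 0 0) / 2)
          = 1 - h2 ((1 + |e1|) / 2) - h2 ((1 + |e2|) / 2)) := by
  have he2le1 : |e2| ≤ 1 := le_trans h21 h11
  constructor
  · -- upper bound
    intro OA OB hOA hOB d1 d2 U' V' hU hV hS
    set M := OB * R * OA with hMdef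
    -- orthogonality of the compensated frames
    have hQ : (OB * B)ᵀ * (OB * B) = 1 := by
      rw [Matrix.transpose_mul, Matrix.mul_assoc, ← Matrix.mul_assoc OBᵀ OB B,
        hOB.1, Matrix.one_mul, hB.1]
    have hP : (A * OA)ᵀ * (A * OA) = 1 := by
      rw [Matrix.transpose_mul, Matrix.mul_assoc, ← Matrix.mul_assoc Aᵀ A OA,
        hA.1, Matrix.one_mul, hOA.1]
    have hMQP : M = (OB * B) * Matrix.diagonal ![e1, e2, e3] * (A * OA) := by
      rw [hMdef, hR]; simp only [Matrix.mul_assoc]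
    have KB := fun x => key_bound e1 e2 e3 h32 h21 (OB * B) (A * OA) M hQ hP hMQP x
    -- entry equations from the SVD of the submatrix
    have hent : ∀ i j, sub2 M i j = V' i 0 * d1 * U' 0 j + V' i 1 * d2 * U' 1 j := by
      intro i j; rw [hS, vdU]
    have hM00 : M 0 0 = V' 0 0 * d1 * U' 0 0 + V' 0 1 * d2 * U' 1 0 := by
      have := hent 0 0; simpa [sub2] using this
    have hM01 : M 0 1 = V' 0 0 * d1 * U' 0 1 + V' 0 1 * d2 * U' 1 1 := by
      have := hent 0 1; simpa [sub2] using this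
    have hM10 : M 1 0 = V' 1 0 * d1 * U' 0 0 + V' 1 1 * d2 * U' 1 0 := by
      have := hent 1 0; simpa [sub2] using this
    have hM11 : M 1 1 = V' 1 0 * d1 * U' 0 1 + V' 1 1 * d2 * U' 1 1 := by
      have := hent 1 1; simpa [sub2] using this
    -- orthonormality of rows of U' and columns of V'
    have hUrow : U' * U'ᵀ = 1 := mul_eq_one_comm.mp hU.1
    have r00 : U' 0 0 * U' 0 0 + U' 0 1 * U' 0 1 = 1 := by
      have := congrFun (congrFun hUrow 0) 0
      simpa [Matrix.mul_apply, Fin.sum_univ_two, Matrix.one_apply] using this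
    have r01 : U' 0 0 * U' 1 0 + U' 0 1 * U' 1 1 = 0 := by
      have := congrFun (congrFun hUrow 0) 1
      simpa [Matrix.mul_apply, Fin.sum_univ_two, Matrix.one_apply] using this
    have r11 : U' 1 0 * U' 1 0 + U' 1 1 * U' 1 1 = 1 := by
      have := congrFun (congrFun hUrow 1) 1
      simpa [Matrix.mul_apply, Fin.sum_univ_two, Matrix.one_apply] using this
    have c00 : V' 0 0 * V' 0 0 + V' 1 0 * V' 1 0 = 1 := by
      have := congrFun (congrFun hV.1 0) 0
      simpa [Matrix.mul_apply, Fin.sum_univ_two, Matrix.one_apply] using this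
    have c01 : V' 0 0 * V' 0 1 + V' 1 0 * V' 1 1 = 0 := by
      have := congrFun (congrFun hV.1 0) 1
      simpa [Matrix.mul_apply, Fin.sum_univ_two, Matrix.one_apply] using this
    have c11 : V' 0 1 * V' 0 1 + V' 1 1 * V' 1 1 = 1 := by
      have := congrFun (congrFun hV.1 1) 1
      simpa [Matrix.mul_apply, Fin.sum_univ_two, Matrix.one_apply] using this
    -- the images of the rows of U'
    have E10 : M 0 0 * U' 0 0 + M 0 1 * U' 0 1 = d1 * V' 0 0 := by
      linear_combination U' 0 0 * hM00 + U' 0 1 * hM01 + (d1 * V' 0 0) * r00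
        + (d2 * V' 0 1) * r01
    have E11 : M 1 0 * U' 0 0 + M 1 1 * U' 0 1 = d1 * V' 1 0 := by
      linear_combination U' 0 0 * hM10 + U' 0 1 * hM11 + (d1 * V' 1 0) * r00
        + (d2 * V' 1 1) * r01
    have E20 : M 0 0 * U' 1 0 + M 0 1 * U' 1 1 = d2 * V' 0 1 := by
      linear_combination U' 1 0 * hM00 + U' 1 1 * hM01 + (d1 * V' 0 0) * r01
        + (d2 * V' 0 1) * r11
    have E21 : M 1 0 * U' 1 0 + M 1 1 * U' 1 1 = d2 * V' 1 1 := by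
      linear_combination U' 1 0 * hM10 + U' 1 1 * hM11 + (d1 * V' 1 0) * r01
        + (d2 * V' 1 1) * r11
    -- largest singular value bound : |d1|,|d2| ≤ |e1|
    have hd1e1 : d1 ^ 2 ≤ e1 ^ 2 := by
      have B1 := (KB ![U' 0 0, U' 0 1, 0]).1
      rw [mulVec3_zero, mulVec3_zero, dot3_zero, E10, E11, r00] at B1
      exact sq_bound_helper d1 (V' 0 0) (V' 1 0) (e1 ^ 2) c00 B1
    have hd2e1 : d2 ^ 2 ≤ e1 ^ 2 := by
      have B2 := (KB ![U' 1 0, U' 1 1, 0]).1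
      rw [mulVec3_zero, mulVec3_zero, dot3_zero, E20, E21, r11] at B2
      exact sq_bound_helper d2 (V' 0 1) (V' 1 1) (e1 ^ 2) c11 B2
    -- second singular value bound : min(|d1|,|d2|) ≤ |e2|
    have hmin : d1 ^ 2 ≤ e2 ^ 2 ∨ d2 ^ 2 ≤ e2 ^ 2 := by
      apply minmax d1 d2 e2 (V' 0 0) (V' 0 1) (V' 1 0) (V' 1 1)
        ((A * OA) 0 0 * U' 0 0 + (A * OA) 0 1 * U' 0 1)
        ((A * OA) 0 0 * U' 1 0 + (A * OA) 0 1 * U' 1 1) c00 c01 c11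
      intro α β hcond
      have hp0 : ((A * OA) *ᵥ ![α * U' 0 0 + β * U' 1 0, α * U' 0 1 + β * U' 1 1, 0]) 0
          = 0 := by
        rw [mulVec3_zero]; linear_combination hcond
      have Bw := (KB ![α * U' 0 0 + β * U' 1 0, α * U' 0 1 + β * U' 1 1, 0]).2 hp0
      rw [mulVec3_zero, mulVec3_zero, dot3_zero] at Bw
      have hx0 : M 0 0 * (α * U' 0 0 + β * U' 1 0) + M 0 1 * (α * U' 0 1 + β * U' 1 1)
          = α * (d1 * V' 0 0) + β * (d2 * V' 0 1) := by
        linear_combination α * E10 + β * E20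
      have hx1 : M 1 0 * (α * U' 0 0 + β * U' 1 0) + M 1 1 * (α * U' 0 1 + β * U' 1 1)
          = α * (d1 * V' 1 0) + β * (d2 * V' 1 1) := by
        linear_combination α * E11 + β * E21
      have hq : (α * U' 0 0 + β * U' 1 0) * (α * U' 0 0 + β * U' 1 0)
          + (α * U' 0 1 + β * U' 1 1) * (α * U' 0 1 + β * U' 1 1) = α ^ 2 + β ^ 2 := by
        linear_combination α ^ 2 * r00 + (2 * α * β) * r01 + β ^ 2 * r11
      rw [hx0, hx1, hq] at Bw
      exact Bw
    -- the correction term is nonpositive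
    have he1sq : e1 ^ 2 ≤ 1 := by
      have := pow_le_pow_left₀ (abs_nonneg e1) h11 2
      simpa [sq_abs] using this
    have hs2 : M 0 0 ^ 2 + M 1 0 ^ 2 ≤ 1 := by
      have B0 := (KB ![1, 0, 0]).1
      rw [mulVec3_zero, mulVec3_zero, dot3_zero] at B0
      simp only [mul_one, mul_zero, add_zero, zero_add, one_mul] at B0
      linarith [B0, he1sq]
    have hs1 : Real.sqrt (M 0 0 ^ 2 + M 1 0 ^ 2) ≤ 1 := Real.sqrt_le_one.mpr hs2
    have habs : |M 0 0| ≤ Real.sqrt (M 0 0 ^ 2 + M 1 0 ^ 2) := by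
      rw [← Real.sqrt_sq_eq_abs]
      exact Real.sqrt_le_sqrt (by nlinarith [sq_nonneg (M 1 0)])
    have hcorr : h2 ((1 + Real.sqrt (M 0 0 ^ 2 + M 1 0 ^ 2)) / 2)
        ≤ h2 ((1 + M 0 0) / 2) := by
      rw [← h2_abs (M 0 0)]
      exact h2_anti (abs_nonneg _) habs hs1
    -- entropy comparisons
    have ad1 : |d1| ≤ |e1| := by
      have := Real.sqrt_le_sqrt hd1e1
      rwa [Real.sqrt_sq_eq_abs, Real.sqrt_sq_eq_abs] at this
    have ad2 : |d2| ≤ |e1| := by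
      have := Real.sqrt_le_sqrt hd2e1
      rwa [Real.sqrt_sq_eq_abs, Real.sqrt_sq_eq_abs] at this
    rcases hmin with hm | hm
    · have am : |d1| ≤ |e2| := by
        have := Real.sqrt_le_sqrt hm
        rwa [Real.sqrt_sq_eq_abs, Real.sqrt_sq_eq_abs] at this
      have hA1 : h2 ((1 + |e1|) / 2) ≤ h2 ((1 + d2) / 2) := by
        rw [← h2_abs d2]; exact h2_anti (abs_nonneg _) ad2 h11
      have hA2 : h2 ((1 + |e2|) / 2) ≤ h2 ((1 + d1) / 2) := by
        rw [← h2_abs d1]; exact h2_anti (abs_nonneg _) am he2le1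
      linarith [hcorr, hA1, hA2]
    · have am : |d2| ≤ |e2| := by
        have := Real.sqrt_le_sqrt hm
        rwa [Real.sqrt_sq_eq_abs, Real.sqrt_sq_eq_abs] at this
      have hA1 : h2 ((1 + |e1|) / 2) ≤ h2 ((1 + d1) / 2) := by
        rw [← h2_abs d1]; exact h2_anti (abs_nonneg _) ad1 h11
      have hA2 : h2 ((1 + |e2|) / 2) ≤ h2 ((1 + d2) / 2) := by
        rw [← h2_abs d2]; exact h2_anti (abs_nonneg _) am he2le1
      linarith [hcorr, hA1, hA2]
  · -- equality case
    have hAAt : A * Aᵀ = 1 := mul_eq_one_comm.mp hA.1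
    have hBBt : B * Bᵀ = 1 := mul_eq_one_comm.mp hB.1
    have hSOAt : SO3 Aᵀ := ⟨by rw [Matrix.transpose_transpose]; exact hAAt,
      by rw [Matrix.det_transpose]; exact hA.2⟩
    have hSOBt : SO3 Bᵀ := ⟨by rw [Matrix.transpose_transpose]; exact hBBt,
      by rw [Matrix.det_transpose]; exact hB.2⟩
    have hM : Bᵀ * R * Aᵀ = Matrix.diagonal ![e1, e2, e3] := by
      rw [hR]
      calc Bᵀ * (B * Matrix.diagonal ![e1, e2, e3] * A) * Aᵀ
          = (Bᵀ * B) * (Matrix.diagonal ![e1, e2, e3] * (A * Aᵀ)) := by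
            simp only [Matrix.mul_assoc]
        _ = Matrix.diagonal ![e1, e2, e3] := by
            rw [hB.1, hAAt, Matrix.mul_one, Matrix.one_mul]
    refine ⟨Aᵀ, Bᵀ, hSOAt, hSOBt, e1, e2, 1, 1, ⟨by simp [SO2], by simp⟩,
      ⟨by simp [SO2], by simp⟩, ?_, ?_⟩
    · rw [hM, Matrix.one_mul, Matrix.mul_one]
      ext i j
      fin_cases i <;> fin_cases j <;>
        simp [sub2, Matrix.diagonal_apply]
    · rw [hM]
      have h00 : (Matrix.diagonal ![e1, e2, e3]) 0 0 = e1 := by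
        simp [Matrix.diagonal_apply]
      have h10 : (Matrix.diagonal ![e1, e2, e3]) 1 0 = 0 := by
        simp [Matrix.diagonal_apply]
      rw [h00, h10, show e1 ^ 2 + (0:ℝ) ^ 2 = e1 ^ 2 by ring, Real.sqrt_sq_eq_abs,
        ← h2_abs e1, ← h2_abs e2]
      ring
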